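/- Let μ be a probability measure on [0,2π) with infinite support, let n ≥ 2, let φ_0, …, φ_{n−1} be its orthonormal polynomials (deg φ_j = j, positive leading coefficients), and let K_{n−1}(ξ, z) = Σ_{j=0}^{n−1} conj(φ_j(ξ)) φ_j(z). Fix ẑ with |ẑ| = 1. Then the polynomial z ↦ K_{n−1}(ẑ, z) = Σ_{j=0}^{n−1} conj(φ_j(ẑ)) φ_j(z) has degree exactly n−1 and has n−1 distinct roots ξ_1, …, ξ_{n−1}, all of modulus 1; moreover K_{n−1}(ξ_i, ξ_j) = 0 for all i ≠ j. -/

import Mathlib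

open MeasureTheory Polynomial Real Set

noncomputable section

/-- `φ` is the `n`-th orthonormal polynomial for the measure `μ`
(viewed as a measure on the unit circle via `θ ↦ exp (i θ)`). -/
def IsOrthonormalPolynomial (μ : Measure ℝ) (n : ℕ) (φ : Polynomial ℂ) : Prop :=
  φ.degree = (n : WithBot ℕ) ∧ φ.leadingCoeff.im = 0 ∧ 0 < φ.leadingCoeff.re ∧
  (∀ m : ℕ, m < n →
    ∫ θ : ℝ, φ.eval (Complex.exp (θ * Complex.I)) *
      Complex.exp (-((m : ℝ) * θ : ℝ) * Complex.I) ∂μ = 0) ∧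
  ∫ θ : ℝ, ‖φ.eval (Complex.exp (θ * Complex.I))‖ ^ 2 ∂μ = 1

/-- the support of `μ` is infinite, i.e. `μ` is not concentrated on a finite set. -/
def HasInfiniteSupport (μ : Measure ℝ) : Prop := ∀ s : Finset ℝ, μ ((s : Set ℝ))ᶜ ≠ 0

namespace CDK

def ee (θ : ℝ) : ℂ := Complex.exp (θ * Complex.I)

lemma ee_norm (θ : ℝ) : ‖ee θ‖ = 1 := by
  rw [ee, Complex.norm_exp_ofReal_mul_I]

lemma ee_mul_conj (θ : ℝ) : ee θ * (starRingEnd ℂ) (ee θ) = 1 := by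
  rw [Complex.mul_conj']
  norm_cast
  rw [ee_norm]; norm_num

lemma ee_cont : Continuous ee := by
  unfold ee; fun_prop

lemma ee_injOn : Set.InjOn ee (Set.Ico 0 (2*π)) := by
  intro a ha b hb hab
  rw [ee, ee, Complex.exp_eq_exp_iff_exists_int] at hab
  obtain ⟨k, hk⟩ := hab
  have : (a : ℂ) = (b + k * (2*π) : ℝ) := by
    have h3 : (a:ℂ) * Complex.I = ((b + k*(2*π) : ℝ) : ℂ) * Complex.I := by
      push_cast; linear_combination hk
    exact mul_right_cancel₀ Complex.I_ne_zero h3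
  have h2 : a = b + k * (2*π) := by exact_mod_cast this
  have hπ : (0:ℝ) < 2*π := by positivity
  obtain ⟨ha1, ha2⟩ := ha; obtain ⟨hb1, hb2⟩ := hb
  have hk0 : k = 0 := by
    rcases lt_trichotomy k 0 with h | h | h
    · have : (k:ℝ) ≤ -1 := by exact_mod_cast Int.le_of_lt_add_one (by simpa using h)
      nlinarith
    · exact h
    · have : (1:ℝ) ≤ (k:ℝ) := by exact_mod_cast h
      nlinarith
  rw [hk0] at h2; simpa using h2

def Sip (μ : Measure ℝ) (p q : Polynomial ℂ) : ℂ :=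
  ∫ θ, p.eval (ee θ) * (starRingEnd ℂ) (q.eval (ee θ)) ∂μ

lemma eval_ee_bound (p : Polynomial ℂ) : ∃ M, ∀ θ, ‖p.eval (ee θ)‖ ≤ M := by
  refine ⟨∑ i ∈ Finset.range (p.natDegree + 1), ‖p.coeff i‖, fun θ => ?_⟩
  rw [Polynomial.eval_eq_sum_range]
  refine (norm_sum_le _ _).trans ?_
  apply Finset.sum_le_sum
  intro i _
  rw [norm_mul, norm_pow, ee_norm]
  simp

lemma integrand_cont (p q : Polynomial ℂ) :
    Continuous (fun θ => p.eval (ee θ) * (starRingEnd ℂ) (q.eval (ee θ))) := by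
  exact ((p.continuous.comp ee_cont).mul ((q.continuous.comp ee_cont).star))

lemma integrable_Sip (μ : Measure ℝ) [IsFiniteMeasure μ] (p q : Polynomial ℂ) :
    Integrable (fun θ => p.eval (ee θ) * (starRingEnd ℂ) (q.eval (ee θ))) μ := by
  obtain ⟨Mp, hMp⟩ := eval_ee_bound p
  obtain ⟨Mq, hMq⟩ := eval_ee_bound q
  refine Integrable.mono' (integrable_const (Mp * Mq)) ((integrand_cont p q).aestronglyMeasurable) ?_
  filter_upwards with θ
  rw [norm_mul, RCLike.norm_conj]
  have h1 := hMp θ; have h2 := hMq θ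
  have : (0:ℝ) ≤ ‖Polynomial.eval (ee θ) p‖ := norm_nonneg _
  nlinarith [norm_nonneg (Polynomial.eval (ee θ) q)]

variable (μ : Measure ℝ) [IsFiniteMeasure μ]

lemma Sip_conj (p q : Polynomial ℂ) : Sip μ p q = (starRingEnd ℂ) (Sip μ q p) := by
  unfold Sip
  rw [← integral_conj]
  congr 1; ext θ; simp; ring

lemma Sip_sub_left (p1 p2 q : Polynomial ℂ) :
    Sip μ (p1 - p2) q = Sip μ p1 q - Sip μ p2 q := by
  unfold Sip
  rw [← integral_sub (integrable_Sip μ p1 q) (integrable_Sip μ p2 q)]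
  congr 1; ext θ; simp; ring

lemma Sip_sub_right (p q1 q2 : Polynomial ℂ) :
    Sip μ p (q1 - q2) = Sip μ p q1 - Sip μ p q2 := by
  unfold Sip
  rw [← integral_sub (integrable_Sip μ p q1) (integrable_Sip μ p q2)]
  congr 1; ext θ; simp; ring

lemma Sip_C_mul_left (c : ℂ) (p q : Polynomial ℂ) :
    Sip μ (Polynomial.C c * p) q = c * Sip μ p q := by
  unfold Sip
  rw [← integral_const_mul]
  congr 1; ext θ; simp; ring

lemma Sip_C_mul_right (c : ℂ) (p q : Polynomial ℂ) :
    Sip μ p (Polynomial.C c * q) = (starRingEnd ℂ) c * Sip μ p q := by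
  unfold Sip
  rw [← integral_const_mul]
  congr 1; ext θ; simp; ring

lemma Sip_sum_left {α : Type*} (s : Finset α) (g : α → Polynomial ℂ) (q : Polynomial ℂ) :
    Sip μ (∑ i ∈ s, g i) q = ∑ i ∈ s, Sip μ (g i) q := by
  unfold Sip
  rw [← integral_finset_sum s (fun i _ => integrable_Sip μ (g i) q)]
  congr 1; ext θ
  rw [Polynomial.eval_finset_sum, Finset.sum_mul]

lemma Sip_sum_right {α : Type*} (s : Finset α) (g : α → Polynomial ℂ) (p : Polynomial ℂ) :
    Sip μ p (∑ i ∈ s, g i) = ∑ i ∈ s, Sip μ p (g i) := by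
  unfold Sip
  rw [← integral_finset_sum s (fun i _ => integrable_Sip μ p (g i))]
  congr 1; ext θ
  rw [Polynomial.eval_finset_sum, map_sum, Finset.mul_sum]

lemma Sip_X_mul (p q : Polynomial ℂ) : Sip μ (Polynomial.X * p) (Polynomial.X * q) = Sip μ p q := by
  unfold Sip
  congr 1; ext θ
  simp only [Polynomial.eval_mul, Polynomial.eval_X, map_mul]
  calc ee θ * eval (ee θ) p * ((starRingEnd ℂ) (ee θ) * (starRingEnd ℂ) (eval (ee θ) q))
      = (ee θ * (starRingEnd ℂ) (ee θ)) * (eval (ee θ) p * (starRingEnd ℂ) (eval (ee θ) q)) := by ring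
    _ = _ := by rw [ee_mul_conj]; ring

lemma Sip_self (p : Polynomial ℂ) :
    Sip μ p p = ((∫ θ, ‖p.eval (ee θ)‖^2 ∂μ : ℝ) : ℂ) := by
  unfold Sip
  have h : ∫ θ, ((‖p.eval (ee θ)‖^2 : ℝ) : ℂ) ∂μ = ((∫ θ, ‖p.eval (ee θ)‖^2 ∂μ : ℝ) : ℂ) :=
    integral_ofReal
  rw [← h]
  congr 1; ext θ
  rw [Complex.mul_conj']
  push_cast
  ring

lemma Sip_self_conj (p : Polynomial ℂ) : (starRingEnd ℂ) (Sip μ p p) = Sip μ p p := by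
  rw [Sip_self]; exact Complex.conj_ofReal _

lemma Sip_shift_left (a : ℂ) (g q : Polynomial ℂ) :
    Sip μ ((Polynomial.X - Polynomial.C a) * g) q
      = Sip μ (Polynomial.X * g) q - a * Sip μ g q := by
  have e1 : (Polynomial.X - Polynomial.C a) * g
      = Polynomial.X * g - Polynomial.C a * g := by ring
  rw [e1, Sip_sub_left, Sip_C_mul_left]

lemma Sip_shift_right (b : ℂ) (p h : Polynomial ℂ) :
    Sip μ p ((Polynomial.X - Polynomial.C b) * h)
      = Sip μ p (Polynomial.X * h) - (starRingEnd ℂ) b * Sip μ p h := by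
  have e1 : (Polynomial.X - Polynomial.C b) * h
      = Polynomial.X * h - Polynomial.C b * h := by ring
  rw [e1, Sip_sub_right, Sip_C_mul_right]

lemma Sip_shift_expand (a b : ℂ) (g h : Polynomial ℂ) :
    Sip μ ((Polynomial.X - Polynomial.C a) * g) ((Polynomial.X - Polynomial.C b) * h)
      = Sip μ g h - (starRingEnd ℂ) b * Sip μ (Polynomial.X * g) h
        - a * Sip μ g (Polynomial.X * h) + a * (starRingEnd ℂ) b * Sip μ g h := by
  rw [Sip_shift_left, Sip_shift_right, Sip_shift_right, Sip_X_mul]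
  ring

omit [IsFiniteMeasure μ] in
lemma degree_X_mul_lt {q : Polynomial ℂ} {m : ℕ} (h : q.degree < (m : WithBot ℕ)) :
    (Polynomial.X * q).degree < ((m + 1 : ℕ) : WithBot ℕ) := by
  rcases eq_or_ne q 0 with rfl | h0
  · rw [mul_zero, Polynomial.degree_zero]
    exact WithBot.bot_lt_coe _
  · rw [Polynomial.degree_mul, Polynomial.degree_X, Polynomial.degree_eq_natDegree h0]
    have hnd : q.natDegree < m := (Polynomial.natDegree_lt_iff_degree_lt h0).mpr h
    exact_mod_cast (by omega : 1 + q.natDegree < m + 1)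

lemma Sip_self_ne_zero
    (hsupp : μ (Set.Ico (0 : ℝ) (2 * π))ᶜ = 0) (hinf : HasInfiniteSupport μ)
    {p : Polynomial ℂ} (hp : p ≠ 0) : Sip μ p p ≠ 0 := by
  rw [Sip_self]
  intro h
  have hI : ∫ θ, ‖p.eval (ee θ)‖^2 ∂μ = 0 := by exact_mod_cast h
  have hcont : Continuous (fun θ => ‖p.eval (ee θ)‖^2) :=
    ((p.continuous.comp ee_cont).norm.pow 2)
  have hint : Integrable (fun θ => ‖p.eval (ee θ)‖^2) μ := by
    obtain ⟨M, hM⟩ := eval_ee_bound p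
    refine Integrable.mono' (integrable_const (M^2)) hcont.aestronglyMeasurable ?_
    filter_upwards with θ
    have := hM θ
    have h0 : (0:ℝ) ≤ ‖p.eval (ee θ)‖ := norm_nonneg _
    rw [Real.norm_eq_abs, abs_of_nonneg (by positivity)]
    nlinarith
  have hae : (fun θ => ‖p.eval (ee θ)‖^2) =ᵐ[μ] 0 :=
    (integral_eq_zero_iff_of_nonneg (fun θ => by positivity) hint).mp hI
  have hnull : μ {θ | p.eval (ee θ) ≠ 0} = 0 := by
    have := hae
    rw [Filter.EventuallyEq, ae_iff] at this
    refine measure_mono_null ?_ this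
    intro θ hθ
    simp only [Set.mem_setOf_eq] at hθ ⊢
    intro hc
    exact hθ (by simpa [sq_eq_zero_iff, norm_eq_zero] using congrArg (fun x : ℝ => x) hc)
  -- the zero set on the circle parameter interval is finite
  set Z : Set ℝ := Set.Ico (0:ℝ) (2*π) ∩ ee ⁻¹' {z | p.IsRoot z} with hZdef
  have hZfin : Z.Finite := by
    apply Set.Finite.of_finite_image (f := ee)
    · exact (p.finite_setOf_isRoot hp).subset (by
        rintro z ⟨θ, ⟨_, hθ2⟩, rfl⟩
        exact hθ2)
    · exact ee_injOn.mono (Set.inter_subset_left)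
  have hsub : (↑hZfin.toFinset : Set ℝ)ᶜ ⊆ {θ | p.eval (ee θ) ≠ 0} ∪ (Set.Ico (0:ℝ) (2*π))ᶜ := by
    intro θ hθ
    simp only [Set.Finite.coe_toFinset, Set.mem_compl_iff, hZdef] at hθ
    by_cases hmem : θ ∈ Set.Ico (0:ℝ) (2*π)
    · left
      simp only [Set.mem_setOf_eq]
      intro hc
      exact hθ ⟨hmem, hc⟩
    · right; exact hmem
  have : μ (↑hZfin.toFinset : Set ℝ)ᶜ = 0 := by
    refine measure_mono_null hsub ?_
    exact le_antisymm (le_trans (measure_union_le _ _) (by rw [hnull, hsupp]; simp)) zero_le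
  exact hinf hZfin.toFinset this
lemma span_lemma (n : ℕ) (φ : ℕ → Polynomial ℂ) (hdeg : ∀ j < n, (φ j).degree = (j : WithBot ℕ)) :
    ∀ m ≤ n, ∀ q : Polynomial ℂ, q.degree < (m : WithBot ℕ) →
      ∃ c : ℕ → ℂ, q = ∑ j ∈ Finset.range m, Polynomial.C (c j) * φ j := by
  intro m
  induction m with
  | zero =>
    intro _ q hq
    refine ⟨0, ?_⟩
    simp only [Finset.range_zero, Finset.sum_empty]
    rw [← Polynomial.degree_eq_bot]
    exact Nat.WithBot.lt_zero_iff.mp (by exact_mod_cast hq)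
  | succ m ih =>
    intro hmn q hq
    have hm : m < n := hmn
    have hφm := hdeg m hm
    have hφm0 : φ m ≠ 0 := by
      intro h; rw [h, Polynomial.degree_zero] at hφm; exact (by simp at hφm)
    have hκ : (φ m).leadingCoeff ≠ 0 := Polynomial.leadingCoeff_ne_zero.mpr hφm0
    have hnd : (φ m).natDegree = m := Polynomial.natDegree_eq_of_degree_eq_some hφm
    set κ := (φ m).leadingCoeff with hκdef
    set d := q.coeff m with hd
    set q' := q - Polynomial.C (d / κ) * φ m with hq'
    have hq'deg : q'.degree < (m : WithBot ℕ) := by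
      rw [Polynomial.degree_lt_iff_coeff_zero]
      intro k hk
      have hk' : m ≤ k := by exact_mod_cast hk
      rw [hq', Polynomial.coeff_sub, Polynomial.coeff_C_mul]
      rcases eq_or_lt_of_le hk' with h | h
      · rw [← h]
        have hc : (φ m).coeff m = κ := by
          rw [hκdef, Polynomial.leadingCoeff, hnd]
        rw [hc, ← hd, div_mul_cancel₀ _ hκ, sub_self]
      · have h1 : q.coeff k = 0 := by
          apply Polynomial.coeff_eq_zero_of_degree_lt
          exact lt_of_lt_of_le hq (by exact_mod_cast Nat.succ_le_of_lt h)
        have h2 : (φ m).coeff k = 0 := by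
          apply Polynomial.coeff_eq_zero_of_degree_lt
          rw [hφm]; exact_mod_cast h
        rw [h1, h2, mul_zero, sub_self]
    obtain ⟨c', hc'⟩ := ih (le_of_lt hm) q' hq'deg
    refine ⟨fun j => if j = m then d / κ else c' j, ?_⟩
    rw [Finset.sum_range_succ]
    have : ∀ j ∈ Finset.range m, Polynomial.C (if j = m then d / κ else c' j) * φ j
        = Polynomial.C (c' j) * φ j := by
      intro j hj
      rw [if_neg (Finset.mem_range.mp hj).ne]
    have hbeta : (fun j => if j = m then d / κ else c' j) m = d / κ := by simp
    rw [Finset.sum_congr rfl this, hbeta, ← hc', hq']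
    ring

lemma conj_ee_pow (θ : ℝ) (m : ℕ) :
    (starRingEnd ℂ) ((ee θ)^m) = Complex.exp ((-((m : ℝ) * θ) : ℝ) * Complex.I) := by
  rw [ee, ← Complex.exp_nat_mul, ← Complex.exp_conj]
  congr 1
  simp [Complex.conj_I]
  push_cast
  ring

lemma Sip_zero_right (μ : Measure ℝ) (p : Polynomial ℂ) : Sip μ p 0 = 0 := by
  unfold Sip; simp

lemma Sip_pow_orth (μ : Measure ℝ) (j : ℕ) (ψ : Polynomial ℂ)
    (horth : ∀ m : ℕ, m < j →
      ∫ θ : ℝ, ψ.eval (Complex.exp (θ * Complex.I)) *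
        Complex.exp (-((m : ℝ) * θ : ℝ) * Complex.I) ∂μ = 0)
    (m : ℕ) (hm : m < j) : Sip μ ψ (Polynomial.X ^ m) = 0 := by
  unfold Sip
  have : ∀ θ : ℝ, ψ.eval (ee θ) * (starRingEnd ℂ) ((Polynomial.X ^ m : Polynomial ℂ).eval (ee θ))
      = ψ.eval (Complex.exp (θ * Complex.I)) * Complex.exp (-((m : ℝ) * θ : ℝ) * Complex.I) := by
    intro θ
    rw [Polynomial.eval_pow, Polynomial.eval_X, conj_ee_pow, Complex.ofReal_neg, ee]
  simp_rw [this]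
  exact horth m hm

section Main

variable (μ : Measure ℝ) [IsFiniteMeasure μ]
variable (n : ℕ) (φ : ℕ → Polynomial ℂ)

/-- The CD kernel polynomial. -/
def Kp (ξ : ℂ) : Polynomial ℂ :=
  ∑ j ∈ Finset.range n, Polynomial.C ((starRingEnd ℂ) ((φ j).eval ξ)) * φ j

lemma Kp_eval (ξ ζ : ℂ) : (Kp n φ ξ).eval ζ
    = ∑ j ∈ Finset.range n, (starRingEnd ℂ) ((φ j).eval ξ) * (φ j).eval ζ := by
  rw [Kp, Polynomial.eval_finset_sum]
  exact Finset.sum_congr rfl fun j _ => by rw [Polynomial.eval_mul, Polynomial.eval_C]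

lemma Kp_eval_conj (ξ ζ : ℂ) :
    (Kp n φ ξ).eval ζ = (starRingEnd ℂ) ((Kp n φ ζ).eval ξ) := by
  rw [Kp_eval, Kp_eval, map_sum]
  exact Finset.sum_congr rfl fun j _ => by
    rw [map_mul, Complex.conj_conj]; ring

variable (hφ : ∀ j < n, IsOrthonormalPolynomial μ j (φ j))
include hφ

omit [IsFiniteMeasure μ] in
lemma hdeg : ∀ j < n, (φ j).degree = (j : WithBot ℕ) := fun j hj => (hφ j hj).1

lemma Sip_phi_lowdeg {j : ℕ} (hj : j < n) {q : Polynomial ℂ}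
    (hq : q.degree < (j : WithBot ℕ)) : Sip μ (φ j) q = 0 := by
  rcases eq_or_ne q 0 with rfl | hq0
  · exact Sip_zero_right μ (φ j)
  · have hnd : q.natDegree < j := (Polynomial.natDegree_lt_iff_degree_lt hq0).mpr hq
    rw [Polynomial.as_sum_range' q j hnd, Sip_sum_right]
    apply Finset.sum_eq_zero
    intro i hi
    rw [← Polynomial.C_mul_X_pow_eq_monomial, Sip_C_mul_right,
      Sip_pow_orth μ j (φ j) (hφ j hj).2.2.2.1 i (Finset.mem_range.mp hi), mul_zero]

lemma Sip_phi_phi {j k : ℕ} (hj : j < n) (hk : k < n) :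
    Sip μ (φ j) (φ k) = if j = k then 1 else 0 := by
  rcases eq_or_ne j k with rfl | hne
  · rw [if_pos rfl, Sip_self]
    have h1 := (hφ j hj).2.2.2.2
    have : ∫ θ, ‖(φ j).eval (ee θ)‖ ^ 2 ∂μ = 1 := by
      rw [show (fun θ => ‖(φ j).eval (ee θ)‖ ^ 2)
        = fun θ : ℝ => ‖(φ j).eval (Complex.exp (θ * Complex.I))‖ ^ 2 from rfl]
      exact h1
    rw [this]; norm_num
  · rw [if_neg hne]
    rcases lt_or_gt_of_ne hne with h | h
    · rw [Sip_conj, Sip_phi_lowdeg μ n φ hφ hk (by rw [hdeg μ n φ hφ j hj]; exact_mod_cast h),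
        map_zero]
    · exact Sip_phi_lowdeg μ n φ hφ hj (by rw [hdeg μ n φ hφ k hk]; exact_mod_cast h)

lemma Sip_repro {p : Polynomial ℂ} (hp : p.degree < (n : WithBot ℕ)) (ξ : ℂ) :
    Sip μ p (Kp n φ ξ) = p.eval ξ := by
  obtain ⟨c, hc⟩ := span_lemma n φ (hdeg μ n φ hφ) n le_rfl p hp
  have hphiK : ∀ j, j < n → Sip μ (φ j) (Kp n φ ξ) = (φ j).eval ξ := by
    intro j hj
    rw [Kp, Sip_sum_right, Finset.sum_eq_single j]
    · rw [Sip_C_mul_right, Sip_phi_phi μ n φ hφ hj hj, if_pos rfl, mul_one, Complex.conj_conj]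
    · intro k hk hkj
      rw [Sip_C_mul_right, Sip_phi_phi μ n φ hφ hj (Finset.mem_range.mp hk),
        if_neg (fun hh => hkj hh.symm), mul_zero]
    · intro hjn; exact absurd (Finset.mem_range.mpr hj) hjn
  rw [hc, Sip_sum_left]
  have h2 : ∀ j ∈ Finset.range n,
      Sip μ (Polynomial.C (c j) * φ j) (Kp n φ ξ) = c j * (φ j).eval ξ := by
    intro j hj
    rw [Sip_C_mul_left, hphiK j (Finset.mem_range.mp hj)]
  rw [Finset.sum_congr rfl h2, Polynomial.eval_finset_sum]
  exact Finset.sum_congr rfl fun j _ => by rw [Polynomial.eval_mul, Polynomial.eval_C]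

lemma Sip_repro' {p : Polynomial ℂ} (hp : p.degree < (n : WithBot ℕ)) (ξ : ℂ) :
    Sip μ (Kp n φ ξ) p = (starRingEnd ℂ) (p.eval ξ) := by
  rw [Sip_conj, Sip_repro μ n φ hφ hp ξ]

omit [IsFiniteMeasure μ] in
lemma Kp_degree_le (ξ : ℂ) (hn : 1 ≤ n) : (Kp n φ ξ).degree ≤ ((n - 1 : ℕ) : WithBot ℕ) := by
  refine (Polynomial.degree_sum_le _ _).trans ?_
  rw [Finset.sup_le_iff]
  intro j hj
  have hj' : j < n := Finset.mem_range.mp hj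
  calc (Polynomial.C ((starRingEnd ℂ) ((φ j).eval ξ)) * φ j).degree
      ≤ (Polynomial.C ((starRingEnd ℂ) ((φ j).eval ξ))).degree + (φ j).degree :=
        Polynomial.degree_mul_le _ _
    _ ≤ 0 + (φ j).degree := by
        exact add_le_add (Polynomial.degree_C_le) le_rfl
    _ = (φ j).degree := by rw [zero_add]
    _ ≤ ((n - 1 : ℕ) : WithBot ℕ) := by
        rw [hdeg μ n φ hφ j hj']
        exact_mod_cast (by omega : j ≤ n - 1)


omit [IsFiniteMeasure μ] in
lemma Kp_degree_lt (ξ : ℂ) (hn : 1 ≤ n) : (Kp n φ ξ).degree < (n : WithBot ℕ) := by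
  refine lt_of_le_of_lt (Kp_degree_le μ n φ hφ ξ hn) ?_
  exact_mod_cast Nat.sub_lt (by omega) one_pos

omit [IsFiniteMeasure μ] in
lemma Kp_eval_self_ne (ξ : ℂ) (hn : 1 ≤ n) : (Kp n φ ξ).eval ξ ≠ 0 := by
  rw [Kp_eval]
  have hsum : ∑ j ∈ Finset.range n, (starRingEnd ℂ) ((φ j).eval ξ) * (φ j).eval ξ
      = ((∑ j ∈ Finset.range n, ‖(φ j).eval ξ‖ ^ 2 : ℝ) : ℂ) := by
    push_cast
    exact Finset.sum_congr rfl fun j _ => by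
      rw [mul_comm, Complex.mul_conj']
  rw [hsum]
  have h0 := hφ 0 (by omega)
  have hφ0C : φ 0 = Polynomial.C ((φ 0).coeff 0) :=
    Polynomial.eq_C_of_degree_le_zero (le_of_eq (by exact_mod_cast h0.1))
  have hlc : (φ 0).leadingCoeff = (φ 0).coeff 0 := by
    rw [Polynomial.leadingCoeff, Polynomial.natDegree_eq_of_degree_eq_some
      (by exact_mod_cast h0.1)]
    norm_num
  have hc0 : (φ 0).coeff 0 ≠ 0 := by
    intro h
    have := h0.2.2.1
    rw [hlc, h] at this
    simp at this
  have heval0 : (φ 0).eval ξ ≠ 0 := by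
    rw [hφ0C, Polynomial.eval_C] at *
    simpa using hc0
  have hpos : 0 < ∑ j ∈ Finset.range n, ‖(φ j).eval ξ‖ ^ 2 := by
    refine Finset.sum_pos' (fun j _ => by positivity) ⟨0, Finset.mem_range.mpr (by omega), ?_⟩
    have : ‖(φ 0).eval ξ‖ > 0 := norm_pos_iff.mpr heval0
    positivity
  exact_mod_cast hpos.ne'

omit [IsFiniteMeasure μ] in
lemma Kp_ne_zero (ξ : ℂ) (hn : 1 ≤ n) : Kp n φ ξ ≠ 0 := fun h => by
  have := Kp_eval_self_ne μ n φ hφ ξ hn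
  rw [h] at this; simp at this

variable (hsupp : μ (Set.Ico (0 : ℝ) (2 * π))ᶜ = 0) (hinf : HasInfiniteSupport μ)
include hsupp hinf

lemma phi_top_ne_zero_on_circle (hn : 1 ≤ n) {ξ : ℂ} (hξ : ‖ξ‖ = 1) :
    (φ (n-1)).eval ξ ≠ 0 := by
  intro hroot
  set j := n - 1 with hjdef
  have hj : j < n := by omega
  set ψ := φ j with hψdef
  have hψdeg : ψ.degree = (j : WithBot ℕ) := hdeg μ n φ hφ j hj
  have hψ0 : ψ ≠ 0 := fun h => by
    rw [h, Polynomial.degree_zero] at hψdeg; exact (by simp at hψdeg)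
  set g := ψ /ₘ (Polynomial.X - Polynomial.C ξ) with hgdef
  have hfact : (Polynomial.X - Polynomial.C ξ) * g = ψ :=
    Polynomial.mul_divByMonic_eq_iff_isRoot.mpr hroot
  have hg0 : g ≠ 0 := fun h => by rw [h, mul_zero] at hfact; exact hψ0 hfact.symm
  have hgdeg : g.degree < (j : WithBot ℕ) := by
    rw [← hψdeg]
    exact Polynomial.degree_divByMonic_lt ψ _ hψ0
      (by rw [Polynomial.degree_X_sub_C]; norm_num)
  have horthg : Sip μ ψ g = 0 := Sip_phi_lowdeg μ n φ hφ hj hgdeg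
  have hone : Sip μ ψ ψ = 1 := by
    have := Sip_phi_phi μ n φ hφ hj hj
    rwa [if_pos rfl] at this
  set a := Sip μ (Polynomial.X * g) g with hadef
  set G := Sip μ g g with hGdef
  have hGconj : (starRingEnd ℂ) G = G := Sip_self_conj μ g
  have hmcξ : ξ * (starRingEnd ℂ) ξ = 1 := by
    rw [Complex.mul_conj', hξ]; norm_num
  have hA : a - ξ * G = 0 := by
    have : Sip μ ((Polynomial.X - Polynomial.C ξ) * g) g = 0 := by rw [hfact]; exact horthg
    rw [Sip_shift_left] at this
    linear_combination this
  have hexp : Sip μ ψ ψ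
      = G - (starRingEnd ℂ) ξ * a - ξ * Sip μ g (Polynomial.X * g)
        + ξ * (starRingEnd ℂ) ξ * G := by
    rw [← hfact, Sip_shift_expand]
  have hconjrel : Sip μ g (Polynomial.X * g) = (starRingEnd ℂ) a := by
    rw [hadef, ← Sip_conj]
  have hca : (starRingEnd ℂ) a = (starRingEnd ℂ) ξ * G := by
    have := congrArg (starRingEnd ℂ) hA
    rw [map_sub, map_mul, hGconj, map_zero] at this
    linear_combination this
  have hzero : (1 : ℂ) = 0 := by
    rw [← hone, hexp, hconjrel, hca]
    linear_combination (-G) * hmcξ - (starRingEnd ℂ) ξ * hA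
  exact one_ne_zero hzero

variable (zhat : ℂ) (hzhat : ‖zhat‖ = 1) (hn : 2 ≤ n)
include hzhat hn

lemma Kp_degree_eq : (Kp n φ zhat).degree = ((n - 1 : ℕ) : WithBot ℕ) := by
  have htop := phi_top_ne_zero_on_circle μ n φ hφ hsupp hinf (by omega) hzhat
  have hlc : (φ (n-1)).leadingCoeff ≠ 0 := by
    have hd := hdeg μ n φ hφ (n-1) (by omega)
    exact Polynomial.leadingCoeff_ne_zero.mpr (fun h => by
      rw [h, Polynomial.degree_zero] at hd; exact (by simp at hd))
  have hcoeff : (Kp n φ zhat).coeff (n-1)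
      = (starRingEnd ℂ) ((φ (n-1)).eval zhat) * (φ (n-1)).leadingCoeff := by
    rw [Kp, Polynomial.finset_sum_coeff]
    rw [Finset.sum_eq_single (n-1)]
    · rw [Polynomial.coeff_C_mul, Polynomial.leadingCoeff,
        Polynomial.natDegree_eq_of_degree_eq_some (hdeg μ n φ hφ (n-1) (by omega))]
    · intro k hk hkne
      rw [Polynomial.coeff_C_mul, Polynomial.coeff_eq_zero_of_degree_lt, mul_zero]
      rw [hdeg μ n φ hφ k (Finset.mem_range.mp hk)]
      have : k < n - 1 := by
        have := Finset.mem_range.mp hk; omega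
      exact_mod_cast this
    · intro h; exact absurd (Finset.mem_range.mpr (by omega)) h
  have hne : (Kp n φ zhat).coeff (n-1) ≠ 0 := by
    rw [hcoeff]
    exact mul_ne_zero (by simpa using htop) hlc
  exact le_antisymm (Kp_degree_le μ n φ hφ zhat (by omega))
    (Polynomial.le_degree_of_ne_zero hne)

lemma root_norm {ξ : ℂ} (hξ : (Kp n φ zhat).IsRoot ξ) : ‖ξ‖ = 1 := by
  set f := Kp n φ zhat with hfdef
  have hf0 : f ≠ 0 := Kp_ne_zero μ n φ hφ zhat (by omega)
  set g := f /ₘ (Polynomial.X - Polynomial.C ξ) with hgdef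
  have hfact : (Polynomial.X - Polynomial.C ξ) * g = f :=
    Polynomial.mul_divByMonic_eq_iff_isRoot.mpr hξ
  have hg0 : g ≠ 0 := fun h => by rw [h, mul_zero] at hfact; exact hf0 hfact.symm
  have hdegq : ((Polynomial.X - Polynomial.C zhat) * g).degree < (n : WithBot ℕ) := by
    rw [Polynomial.degree_mul, Polynomial.degree_X_sub_C]
    have h1 : (1 : WithBot ℕ) + g.degree = f.degree := by
      rw [← hfact, Polynomial.degree_mul, Polynomial.degree_X_sub_C]
    rw [h1, hfdef, Kp_degree_eq μ n φ hφ hsupp hinf zhat hzhat hn]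
    exact_mod_cast Nat.sub_lt (by omega) one_pos
  have h0 : Sip μ f ((Polynomial.X - Polynomial.C zhat) * g) = 0 := by
    rw [hfdef, Sip_repro' μ n φ hφ hdegq zhat]
    simp
  rw [← hfact, Sip_shift_expand] at h0
  set a := Sip μ (Polynomial.X * g) g with hadef
  set G := Sip μ g g with hGdef
  have hconjrel : Sip μ g (Polynomial.X * g) = (starRingEnd ℂ) a := by
    rw [hadef, ← Sip_conj]
  have hGc : (starRingEnd ℂ) G = G := Sip_self_conj μ g
  have hmc : zhat * (starRingEnd ℂ) zhat = 1 := by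
    rw [Complex.mul_conj', hzhat]; norm_num
  rw [hconjrel] at h0
  set w := (starRingEnd ℂ) zhat with hwdef
  by_cases hden : w * G - (starRingEnd ℂ) a = 0
  · exfalso
    have hz : Sip μ ((Polynomial.X - Polynomial.C zhat) * g)
        ((Polynomial.X - Polynomial.C zhat) * g) = 0 := by
      rw [Sip_shift_expand, hconjrel]
      linear_combination h0 + (zhat - ξ) * hden
    exact Sip_self_ne_zero μ hsupp hinf
      (mul_ne_zero (Polynomial.X_sub_C_ne_zero zhat) hg0) hz
  · have hkey : ξ * (w * G - (starRingEnd ℂ) a) = w * a - G := by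
      linear_combination h0
    have hrel : w * a - G = -w * (starRingEnd ℂ) (w * G - (starRingEnd ℂ) a) := by
      rw [map_sub, map_mul, Complex.conj_conj, hGc, hwdef, Complex.conj_conj]
      linear_combination G * hmc
    have hnorm : ‖ξ‖ * ‖w * G - (starRingEnd ℂ) a‖ = ‖w * G - (starRingEnd ℂ) a‖ := by
      rw [← norm_mul, hkey, hrel, norm_mul, norm_neg, RCLike.norm_conj, hwdef,
        RCLike.norm_conj, hzhat, one_mul]
    exact mul_right_cancel₀ (norm_ne_zero_iff.mpr hden)
      (by rw [hnorm, one_mul])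

lemma root_simple (ξ : ℂ) : (Kp n φ zhat).rootMultiplicity ξ ≤ 1 := by
  by_contra hcon
  push_neg at hcon
  set f := Kp n φ zhat with hfdef
  have hf0 : f ≠ 0 := Kp_ne_zero μ n φ hφ zhat (by omega)
  have hroot : f.IsRoot ξ := by
    by_contra h
    rw [Polynomial.rootMultiplicity_eq_zero h] at hcon; omega
  have hnξ : ‖ξ‖ = 1 := root_norm μ n φ hφ hsupp hinf zhat hzhat hn hroot
  have hmcξ : ξ * (starRingEnd ℂ) ξ = 1 := by rw [Complex.mul_conj', hnξ]; norm_num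
  have hdvd : (Polynomial.X - Polynomial.C ξ) ^ 2 ∣ f :=
    dvd_trans (pow_dvd_pow _ hcon) (Polynomial.pow_rootMultiplicity_dvd f ξ)
  obtain ⟨u, hu⟩ := hdvd
  have hu0 : u ≠ 0 := fun h => hf0 (by rw [hu, h, mul_zero])
  have hfd : f.degree = ((n - 1 : ℕ) : WithBot ℕ) :=
    Kp_degree_eq μ n φ hφ hsupp hinf zhat hzhat hn
  have hdeg_eq : ((n - 1 : ℕ) : WithBot ℕ) = ((2 + u.natDegree : ℕ) : WithBot ℕ) := by
    rw [← hfd, hu, Polynomial.degree_mul, Polynomial.degree_pow,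
      Polynomial.degree_X_sub_C, Polynomial.degree_eq_natDegree hu0]
    push_cast
    ring
  have hnd : n - 1 = 2 + u.natDegree := by exact_mod_cast hdeg_eq
  set C₀ := (Polynomial.X - Polynomial.C zhat) * u with hC₀def
  have hC₀0 : C₀ ≠ 0 := mul_ne_zero (Polynomial.X_sub_C_ne_zero zhat) hu0
  have hC₀deg : C₀.degree < ((n - 1 : ℕ) : WithBot ℕ) := by
    rw [hC₀def, Polynomial.degree_mul, Polynomial.degree_X_sub_C,
      Polynomial.degree_eq_natDegree hu0]
    exact_mod_cast (by omega : 1 + u.natDegree < n - 1)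
  have hC₀deg' : C₀.degree < (n : WithBot ℕ) :=
    lt_trans hC₀deg (by exact_mod_cast (by omega : n - 1 < n))
  have hXC₀deg : (Polynomial.X * C₀).degree < (n : WithBot ℕ) := by
    have := degree_X_mul_lt hC₀deg
    rwa [(by omega : n - 1 + 1 = n)] at this
  have hevalC₀ : C₀.eval zhat = 0 := by
    rw [hC₀def, Polynomial.eval_mul]
    simp
  have hB0 : Sip μ ((Polynomial.X - Polynomial.C zhat) * f) (Polynomial.X * C₀) = 0 := by
    rw [Sip_shift_left, Sip_X_mul, hfdef,
      Sip_repro' μ n φ hφ hC₀deg' zhat, Sip_repro' μ n φ hφ hXC₀deg zhat,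
      hevalC₀, Polynomial.eval_mul, hevalC₀]
    simp
  have hBform : (Polynomial.X - Polynomial.C zhat) * f
      = (Polynomial.X - Polynomial.C ξ) * ((Polynomial.X - Polynomial.C ξ) * C₀) := by
    rw [hu, hC₀def]; ring
  rw [hBform] at hB0
  have e1 := Sip_shift_left μ ξ ((Polynomial.X - Polynomial.C ξ) * C₀) (Polynomial.X * C₀)
  have e2 := Sip_X_mul μ ((Polynomial.X - Polynomial.C ξ) * C₀) C₀
  have e3 := Sip_shift_left μ ξ C₀ C₀
  have e4 := Sip_shift_left μ ξ C₀ (Polynomial.X * C₀)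
  have e5 := Sip_X_mul μ C₀ C₀
  have hconjrel : Sip μ C₀ (Polynomial.X * C₀) = (starRingEnd ℂ) (Sip μ (Polynomial.X * C₀) C₀) := by
    rw [← Sip_conj]
  set aC := Sip μ (Polynomial.X * C₀) C₀ with haCdef
  set GC := Sip μ C₀ C₀ with hGCdef
  have hGCc : (starRingEnd ℂ) GC = GC := Sip_self_conj μ C₀
  have hEq : aC - 2 * ξ * GC + ξ^2 * (starRingEnd ℂ) aC = 0 := by
    linear_combination hB0 - e1 - e2 - e3 + ξ * e4 + ξ * e5 - ξ^2 * hconjrel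
  have hexp := Sip_shift_expand μ ξ ξ C₀ C₀
  have hz : Sip μ ((Polynomial.X - Polynomial.C ξ) * C₀)
      ((Polynomial.X - Polynomial.C ξ) * C₀) = 0 := by
    rw [hexp, hconjrel]
    linear_combination (-(starRingEnd ℂ) ξ) * hEq + (ξ * (starRingEnd ℂ) aC - GC) * hmcξ
  exact Sip_self_ne_zero μ hsupp hinf
    (mul_ne_zero (Polynomial.X_sub_C_ne_zero ξ) hC₀0) hz

lemma root_pair {ξ₁ ξ₂ : ℂ} (h1 : (Kp n φ zhat).IsRoot ξ₁) (h2 : (Kp n φ zhat).IsRoot ξ₂)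
    (hne : ξ₁ ≠ ξ₂) : (Kp n φ ξ₁).eval ξ₂ = 0 := by
  have hn1 : ‖ξ₁‖ = 1 := root_norm μ n φ hφ hsupp hinf zhat hzhat hn h1
  have hmc : zhat * (starRingEnd ℂ) zhat = 1 := by rw [Complex.mul_conj', hzhat]; norm_num
  have hmc1 : ξ₁ * (starRingEnd ℂ) ξ₁ = 1 := by rw [Complex.mul_conj', hn1]; norm_num
  have hKz : ∀ ξ : ℂ, (Kp n φ zhat).IsRoot ξ → (Kp n φ ξ).eval zhat = 0 := by
    intro ξ hξ
    rw [Kp_eval_conj, show (Kp n φ zhat).eval ξ = 0 from hξ, map_zero]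
  set h₁ := Kp n φ ξ₁ /ₘ (Polynomial.X - Polynomial.C zhat) with hh₁def
  set h₂ := Kp n φ ξ₂ /ₘ (Polynomial.X - Polynomial.C zhat) with hh₂def
  have hfact₁ : (Polynomial.X - Polynomial.C zhat) * h₁ = Kp n φ ξ₁ :=
    Polynomial.mul_divByMonic_eq_iff_isRoot.mpr (hKz ξ₁ h1)
  have hfact₂ : (Polynomial.X - Polynomial.C zhat) * h₂ = Kp n φ ξ₂ :=
    Polynomial.mul_divByMonic_eq_iff_isRoot.mpr (hKz ξ₂ h2)
  have hdh₁ : ∀ a : ℂ, ((Polynomial.X - Polynomial.C a) * h₁).degree < (n : WithBot ℕ) := by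
    intro a
    rw [Polynomial.degree_mul, Polynomial.degree_X_sub_C]
    have e : (1 : WithBot ℕ) + h₁.degree = (Kp n φ ξ₁).degree := by
      rw [← hfact₁, Polynomial.degree_mul, Polynomial.degree_X_sub_C]
    rw [e]
    exact Kp_degree_lt μ n φ hφ ξ₁ (by omega)
  have hdh₂ : ∀ a : ℂ, ((Polynomial.X - Polynomial.C a) * h₂).degree < (n : WithBot ℕ) := by
    intro a
    rw [Polynomial.degree_mul, Polynomial.degree_X_sub_C]
    have e : (1 : WithBot ℕ) + h₂.degree = (Kp n φ ξ₂).degree := by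
      rw [← hfact₂, Polynomial.degree_mul, Polynomial.degree_X_sub_C]
    rw [e]
    exact Kp_degree_lt μ n φ hφ ξ₂ (by omega)
  have hI : Sip μ ((Polynomial.X - Polynomial.C zhat) * h₂)
      ((Polynomial.X - Polynomial.C ξ₂) * h₁) = 0 := by
    rw [hfact₂, Sip_repro' μ n φ hφ (hdh₁ ξ₂) ξ₂, Polynomial.eval_mul]
    simp
  have hII : Sip μ ((Polynomial.X - Polynomial.C zhat) * h₁)
      ((Polynomial.X - Polynomial.C ξ₁) * h₂) = 0 := by
    rw [hfact₁, Sip_repro' μ n φ hφ (hdh₂ ξ₁) ξ₁, Polynomial.eval_mul]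
    simp
  have hIexp := Sip_shift_expand μ zhat ξ₂ h₂ h₁
  have hIIexp := Sip_shift_expand μ zhat ξ₁ h₁ h₂
  have c1 : Sip μ h₂ h₁ = (starRingEnd ℂ) (Sip μ h₁ h₂) := Sip_conj μ h₂ h₁
  have c2 : Sip μ (Polynomial.X * h₂) h₁
      = (starRingEnd ℂ) (Sip μ h₁ (Polynomial.X * h₂)) := Sip_conj μ _ _
  have c3 : Sip μ h₂ (Polynomial.X * h₁)
      = (starRingEnd ℂ) (Sip μ (Polynomial.X * h₁) h₂) := Sip_conj μ _ _
  set P := Sip μ h₁ h₂ with hPdef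
  set Q := Sip μ (Polynomial.X * h₁) h₂ with hQdef
  set R := Sip μ h₁ (Polynomial.X * h₂) with hRdef
  have hIc : (starRingEnd ℂ) P - (starRingEnd ℂ) ξ₂ * (starRingEnd ℂ) R
      - zhat * (starRingEnd ℂ) Q + zhat * (starRingEnd ℂ) ξ₂ * (starRingEnd ℂ) P = 0 := by
    linear_combination hI - hIexp - (1 + zhat * (starRingEnd ℂ) ξ₂) * c1
      + (starRingEnd ℂ) ξ₂ * c2 + zhat * c3
  have hI' : P - ξ₂ * R - (starRingEnd ℂ) zhat * Q + (starRingEnd ℂ) zhat * ξ₂ * P = 0 := by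
    have h := congrArg (starRingEnd ℂ) hIc
    simp only [map_sub, map_add, map_mul, map_zero, Complex.conj_conj] at h
    linear_combination h
  have hIIc : P - (starRingEnd ℂ) ξ₁ * Q - zhat * R + zhat * (starRingEnd ℂ) ξ₁ * P = 0 := by
    linear_combination hII - hIIexp
  have hsub : (ξ₁ - ξ₂) * (R - (starRingEnd ℂ) zhat * P) = 0 := by
    linear_combination hI' - ξ₁ * (starRingEnd ℂ) zhat * hIIc
      + (P * ξ₁ * (starRingEnd ℂ) ξ₁ - ξ₁ * R) * hmc
      + (P - (starRingEnd ℂ) zhat * Q) * hmc1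
  have hR' : R - (starRingEnd ℂ) zhat * P = 0 := by
    rcases mul_eq_zero.mp hsub with h | h
    · exact absurd (sub_eq_zero.mp h) hne
    · exact h
  have hQ' : (starRingEnd ℂ) zhat * Q - P = 0 := by
    linear_combination (-1) * hI' - ξ₂ * hR'
  have hT : (Kp n φ ξ₁).eval ξ₂ = Sip μ (Kp n φ ξ₁) (Kp n φ ξ₂) :=
    (Sip_repro μ n φ hφ (Kp_degree_lt μ n φ hφ ξ₁ (by omega)) ξ₂).symm
  rw [hT, ← hfact₁, ← hfact₂, Sip_shift_expand, ← hPdef, ← hQdef, ← hRdef]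
  linear_combination (-1) * hQ' - zhat * hR'

end Main
end CDK
/-- The Christoffel–Darboux kernel `K_{n−1}(ẑ, ·)` has exactly `n−1` distinct roots,
all on the unit circle, and the kernel vanishes at every pair of distinct roots. -/
theorem cd_kernel_roots
    (μ : Measure ℝ) [IsProbabilityMeasure μ]
    (hsupp : μ (Set.Ico (0 : ℝ) (2 * π))ᶜ = 0)
    (hinf : HasInfiniteSupport μ)
    (n : ℕ) (hn : 2 ≤ n)
    (φ : ℕ → Polynomial ℂ)
    (hφ : ∀ j < n, IsOrthonormalPolynomial μ j (φ j))
    (zhat : ℂ) (hzhat : ‖zhat‖ = 1) :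
    (∑ j ∈ Finset.range n,
        Polynomial.C (starRingEnd ℂ ((φ j).eval zhat)) * φ j).degree
      = ((n - 1 : ℕ) : WithBot ℕ) ∧
    ∃ ξ : Fin (n - 1) → ℂ,
      Function.Injective ξ ∧
      (∀ i, ‖ξ i‖ = 1) ∧
      (∀ i, (∑ j ∈ Finset.range n,
        Polynomial.C (starRingEnd ℂ ((φ j).eval zhat)) * φ j).eval (ξ i) = 0) ∧
      (∀ i j : Fin (n - 1), i ≠ j →
        (∑ l ∈ Finset.range n,
          starRingEnd ℂ ((φ l).eval (ξ i)) * (φ l).eval (ξ j)) = 0) := by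
  classical
  have hdegf := CDK.Kp_degree_eq μ n φ hφ hsupp hinf zhat hzhat hn
  have hf0 : CDK.Kp n φ zhat ≠ 0 := CDK.Kp_ne_zero μ n φ hφ zhat (by omega)
  refine ⟨hdegf, ?_⟩
  set f := CDK.Kp n φ zhat with hfdef
  have hnd : f.natDegree = n - 1 := Polynomial.natDegree_eq_of_degree_eq_some hdegf
  have hcard : f.roots.card = n - 1 := by
    rw [Polynomial.splits_iff_card_roots.mp (IsAlgClosed.splits f), hnd]
  have hnodup : f.roots.Nodup := by
    rw [Multiset.nodup_iff_count_le_one]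
    intro a
    rw [Polynomial.count_roots]
    exact CDK.root_simple μ n φ hφ hsupp hinf zhat hzhat hn a
  have htf : f.roots.toFinset.card = n - 1 := by
    rw [Multiset.toFinset_card_of_nodup hnodup, hcard]
  have e := f.roots.toFinset.equivFinOfCardEq htf
  have hmemroot : ∀ i : Fin (n - 1), f.IsRoot ((e.symm i : f.roots.toFinset) : ℂ) := by
    intro i
    exact Polynomial.isRoot_of_mem_roots (Multiset.mem_toFinset.mp (e.symm i).2)
  refine ⟨fun i => ((e.symm i : f.roots.toFinset) : ℂ), ?_, ?_, ?_, ?_⟩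
  · intro i j hij
    exact e.symm.injective (Subtype.ext hij)
  · intro i
    exact CDK.root_norm μ n φ hφ hsupp hinf zhat hzhat hn (hmemroot i)
  · intro i
    exact hmemroot i
  · intro i j hij
    have hne : ((e.symm i : f.roots.toFinset) : ℂ) ≠ ((e.symm j : f.roots.toFinset) : ℂ) := by
      intro h
      exact hij (e.symm.injective (Subtype.ext h))
    have := CDK.root_pair μ n φ hφ hsupp hinf zhat hzhat hn (hmemroot i) (hmemroot j) hne
    rwa [CDK.Kp_eval] at this
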